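/- Let H be a complex Hilbert space and let A, B be positive invertible bounded linear operators on H with AB = BA. Then √(AB) ≤ ∫_0^1 A^t B^(1−t) dt ≤ (A + B)/2 in the operator order, where the integral is the Bochner integral of the operator-valued function t ↦ A^t B^(1−t) on [0,1] and the square root and real powers are defined via the continuous functional calculus. -/

import Mathlib

set_option synthInstance.maxHeartbeats 400000
set_option maxHeartbeats 1000000

open scoped NNReal
open MeasureTheory

section helper_lemmas

variable {H : Type*} [NormedAddCommGroup H] [InnerProductSpace ℂ H] [CompleteSpace H]

open scoped ContinuousFunctionalCalculus in
lemma my_commute_cfc (f : ℝ → ℝ) {a b : H →L[ℂ] H} (ha : IsSelfAdjoint a) (hab : Commute a b) :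
    Commute (cfc f a) b := by
  by_cases hf : ContinuousOn f (spectrum ℝ a)
  · rw [cfc_apply f a ha hf]
    suffices h : ∀ g : C(spectrum ℝ a, ℝ), Commute (cfcHom ha g) b from h _
    intro g
    let T : Subalgebra ℝ C(spectrum ℝ a, ℝ) :=
      (Subalgebra.centralizer ℝ {b}).comap (cfcHom ha (R := ℝ)).toAlgHom
    have hmemT : ∀ q : C(spectrum ℝ a, ℝ), q ∈ T ↔ b * cfcHom ha q = cfcHom ha q * b := by
      intro q
      simp [T, Subalgebra.mem_comap, Subalgebra.mem_centralizer_iff]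
    have hT : IsClosed (T : Set C(spectrum ℝ a, ℝ)) := by
      have hc : Continuous (fun q : C(spectrum ℝ a, ℝ) => cfcHom ha (R := ℝ) q) :=
        cfcHom_continuous ha
      have : (T : Set C(spectrum ℝ a, ℝ)) =
          {q : C(spectrum ℝ a, ℝ) | b * cfcHom ha q = cfcHom ha q * b} := by
        ext q; exact hmemT q
      rw [this]
      exact isClosed_eq (continuous_const.mul hc) (hc.mul continuous_const)
    have hle : polynomialFunctions (spectrum ℝ a) ≤ T := by
      rw [polynomialFunctions.eq_adjoin_X, Algebra.adjoin_le_iff]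
      rintro q hq
      simp only [Set.mem_singleton_iff] at hq
      subst hq
      rw [SetLike.mem_coe, hmemT]
      have hX : (Polynomial.toContinuousMapOnAlgHom (spectrum ℝ a) Polynomial.X) =
          (ContinuousMap.id ℝ).restrict (spectrum ℝ a) := by
        exact Polynomial.toContinuousMapOn_X_eq_restrict_id _
      rw [hX, cfcHom_id ha]
      exact hab.symm
    have htop : (⊤ : Subalgebra ℝ C(spectrum ℝ a, ℝ)) ≤ T := by
      rw [← polynomialFunctions.topologicalClosure (spectrum ℝ a)]
      exact Subalgebra.topologicalClosure_minimal hle hT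
    have hg : g ∈ T := htop (by trivial)
    rw [hmemT] at hg
    exact hg.symm
  · rw [cfc_apply_of_not_continuousOn a hf]
    exact Commute.zero_left b

lemma my_mul_nonneg {a b : H →L[ℂ] H} (ha : 0 ≤ a) (hb : 0 ≤ b) (hab : Commute a b) :
    0 ≤ a * b := by
  have ha' : IsSelfAdjoint a := .of_nonneg ha
  have hs_sa : IsSelfAdjoint (cfc Real.sqrt a) := cfc_predicate _ a
  have hss : cfc Real.sqrt a * cfc Real.sqrt a = a := by
    rw [← cfc_mul Real.sqrt Real.sqrt a]
    have : cfc (fun x => Real.sqrt x * Real.sqrt x) a = cfc (fun x : ℝ => x) a :=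
      cfc_congr fun x hx => Real.mul_self_sqrt (spectrum_nonneg_of_nonneg ha hx)
    rw [this, cfc_id' ℝ a]
  have hcomm : Commute (cfc Real.sqrt a) b := my_commute_cfc _ ha' hab
  calc (0 : H →L[ℂ] H) ≤ star (cfc Real.sqrt a) * b * cfc Real.sqrt a := star_left_conjugate_nonneg hb _
    _ = a * b := by
        rw [hs_sa.star_eq, mul_assoc, ← hcomm.eq, ← mul_assoc, hss]

lemma my_mul_right_mono {S T B : H →L[ℂ] H} (h : S ≤ T) (hB : 0 ≤ B) (hSB : Commute S B)
    (hTB : Commute T B) : S * B ≤ T * B := by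
  have h0 : 0 ≤ T - S := sub_nonneg.2 h
  have h1 : 0 ≤ (T - S) * B := my_mul_nonneg h0 hB (hTB.sub_left hSB)
  rw [sub_mul] at h1
  exact sub_nonneg.1 h1

lemma my_integral_mono {F G : ℝ → H →L[ℂ] H} (hF : IntervalIntegrable F MeasureTheory.volume 0 1)
    (hG : IntervalIntegrable G MeasureTheory.volume 0 1)
    (h : ∀ t ∈ Set.Icc (0:ℝ) 1, F t ≤ G t) :
    (∫ t in (0:ℝ)..1, F t) ≤ ∫ t in (0:ℝ)..1, G t := by
  rw [← sub_nonneg, ← intervalIntegral.integral_sub hG hF]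
  set K : ℝ → H →L[ℂ] H := fun t => G t - F t with hK
  have hKint : IntervalIntegrable K MeasureTheory.volume 0 1 := hG.sub hF
  have hKpos : ∀ t ∈ Set.Icc (0:ℝ) 1, (K t).IsPositive := fun t ht =>
    (ContinuousLinearMap.nonneg_iff_isPositive _).1 (sub_nonneg.2 (h t ht))
  rw [ContinuousLinearMap.nonneg_iff_isPositive]
  constructor
  · -- selfadjoint
    have hstar : star (∫ t in (0:ℝ)..1, K t) = ∫ t in (0:ℝ)..1, star (K t) := by
      exact ((starL' ℝ : (H →L[ℂ] H) ≃L[ℝ] (H →L[ℂ] H)).toContinuousLinearMap.intervalIntegral_comp_comm hKint).symm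
    rw [← ContinuousLinearMap.isSelfAdjoint_iff_isSymmetric, IsSelfAdjoint, hstar]
    refine intervalIntegral.integral_congr fun t ht => ?_
    rw [Set.uIcc_of_le (by norm_num : (0:ℝ) ≤ 1)] at ht
    exact (hKpos t ht).isSelfAdjoint
  · -- inner positivity
    intro v
    set φ : (H →L[ℂ] H) →L[ℝ] ℝ :=
      (RCLike.reCLM (K := ℂ)).comp
        (((innerSL ℂ v).comp (ContinuousLinearMap.apply ℂ H v)).restrictScalars ℝ) with hφ
    have hφ_apply : ∀ T : H →L[ℂ] H, φ T = RCLike.re (inner ℂ v (T v) : ℂ) := fun _ => rfl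
    have hcomm : φ (∫ t in (0:ℝ)..1, K t) = ∫ t in (0:ℝ)..1, φ (K t) :=
      (φ.intervalIntegral_comp_comm hKint).symm
    rw [ContinuousLinearMap.reApplyInnerSelf]
    have : (RCLike.re (inner ℂ ((∫ t in (0:ℝ)..1, K t) v) v : ℂ)) =
        RCLike.re (inner ℂ v ((∫ t in (0:ℝ)..1, K t) v) : ℂ) := inner_re_symm _ _
    rw [this, ← hφ_apply, hcomm]
    refine intervalIntegral.integral_nonneg (by norm_num) fun t ht => ?_
    rw [hφ_apply]
    have := (hKpos t ht).inner_nonneg_left v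
    rw [← inner_re_symm]; exact (RCLike.nonneg_iff.1 this).1


lemma my_exp_smul (c : ℝ) (D : H →L[ℂ] H) (hD : IsSelfAdjoint D) :
    NormedSpace.exp (c • D) = cfc (fun x : ℝ => Real.exp (c * x)) D := by
  rw [show (fun x : ℝ => Real.exp (c * x)) = (Real.exp <| c * ·) from rfl,
    cfc_comp_const_mul (R := ℝ) (p := IsSelfAdjoint) c Real.exp D (by fun_prop) hD,
    CFC.real_exp_eq_normedSpace_exp (IsSelfAdjoint.smul (star_trivial c) hD)]

lemma my_rpow_eq_exp (C : H →L[ℂ] H) (hC : 0 ≤ C) (hσ : ∀ x ∈ spectrum ℝ C, 0 < x) (t : ℝ) :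
    C ^ t = NormedSpace.exp (t • CFC.log C) := by
  have hC' : IsSelfAdjoint C := .of_nonneg hC
  have hlog_cont : ContinuousOn Real.log (spectrum ℝ C) := by
    fun_prop (disch := exact fun x hx => (hσ x hx).ne')
  calc C ^ t = cfc (fun x : ℝ≥0 => x ^ t) C := rfl
    _ = cfc (fun x : ℝ => ((x.toNNReal ^ t : ℝ≥0) : ℝ)) C := cfc_nnreal_eq_real _ C hC
    _ = cfc (fun x : ℝ => Real.exp (t * Real.log x)) C := by
        refine cfc_congr fun x hx => ?_
        have hx' : 0 < x := hσ x hx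
        rw [NNReal.coe_rpow, Real.coe_toNNReal _ hx'.le, Real.rpow_def_of_pos hx', mul_comm]
    _ = cfc (Real.exp ∘ fun x : ℝ => t * Real.log x) C := rfl
    _ = cfc Real.exp (cfc (fun x : ℝ => t * Real.log x) C) := by
        refine cfc_comp Real.exp _ C hC' (by fun_prop) ?_
        fun_prop (disch := exact fun x hx => (hσ x hx).ne')
    _ = cfc Real.exp (t • CFC.log C) := by
        rw [CFC.log, cfc_const_mul t Real.log C hlog_cont]
    _ = NormedSpace.exp (t • CFC.log C) := by
        have : IsSelfAdjoint (CFC.log C) := cfc_predicate _ C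
        exact CFC.real_exp_eq_normedSpace_exp (IsSelfAdjoint.smul (star_trivial t) this)


end helper_lemmas

/-- For commuting positive invertible bounded operators `A`, `B`:
`√(AB) ≤ ∫_0^1 A^t B^(1−t) dt ≤ (A + B)/2` in the operator order. -/
theorem stmt_14 {H : Type*} [NormedAddCommGroup H] [InnerProductSpace ℂ H]
    [CompleteSpace H] (A B : H →L[ℂ] H) (hA : 0 ≤ A) (hB : 0 ≤ B)
    (hAu : IsUnit A) (hBu : IsUnit B) (hAB : A * B = B * A) :
    CFC.sqrt (A * B) ≤ (∫ t in (0 : ℝ)..1, A ^ t * B ^ (1 - t)) ∧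
    (∫ t in (0 : ℝ)..1, A ^ t * B ^ (1 - t)) ≤ (1 / 2 : ℝ) • (A + B) := by
  have hA' : IsSelfAdjoint A := .of_nonneg hA
  have hB' : IsSelfAdjoint B := .of_nonneg hB
  letI : NormedAlgebra ℚ (H →L[ℂ] H) := NormedAlgebra.restrictScalars ℚ ℂ _
  have hσA : ∀ x ∈ spectrum ℝ A, 0 < x := by
    intro x hx
    rcases (spectrum_nonneg_of_nonneg hA hx).lt_or_eq with h | h
    · exact h
    · exact absurd (h ▸ hx) (spectrum.zero_notMem ℝ hAu)
  have hσB : ∀ x ∈ spectrum ℝ B, 0 < x := by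
    intro x hx
    rcases (spectrum_nonneg_of_nonneg hB hx).lt_or_eq with h | h
    · exact h
    · exact absurd (h ▸ hx) (spectrum.zero_notMem ℝ hBu)
  set lA := CFC.log A with hlA_def
  set lB := CFC.log B with hlB_def
  have hlA : IsSelfAdjoint lA := cfc_predicate _ A
  have hlB : IsSelfAdjoint lB := cfc_predicate _ B
  have hexpB : NormedSpace.exp lB = B := CFC.exp_log B ⟨hB, hBu⟩
  have hABc : Commute A B := hAB
  have hlA_B : Commute lA B := my_commute_cfc Real.log hA' hABc
  have hlB_B : Commute lB B := my_commute_cfc Real.log hB' (Commute.refl B)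
  have hlAlB : Commute lA lB := (my_commute_cfc Real.log hB' hlA_B.symm).symm
  set D := lA - lB with hD_def
  have hD : IsSelfAdjoint D := hlA.sub hlB
  have hDB : Commute D B := hlA_B.sub_left hlB_B
  set Φ : ℝ → H →L[ℂ] H := fun t => NormedSpace.exp (t • D) with hΦ_def
  have hΦcfc : ∀ t : ℝ, Φ t = cfc (fun x : ℝ => Real.exp (t * x)) D := fun t => my_exp_smul t D hD
  have hΦB : ∀ t : ℝ, Commute (Φ t) B := fun t =>
    hΦcfc t ▸ my_commute_cfc (fun x : ℝ => Real.exp (t * x)) hD hDB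
  have hΦnn : ∀ t : ℝ, 0 ≤ Φ t := fun t =>
    hΦcfc t ▸ cfc_nonneg (fun x _ => (Real.exp_pos _).le)
  have claim2 : ∀ t : ℝ, A ^ t * B ^ (1 - t) = Φ t * B := by
    intro t
    have e0 : t • D = t • lA + (-t) • lB := by rw [hD_def]; module
    have e1 : Φ t = NormedSpace.exp (t • lA) * NormedSpace.exp ((-t) • lB) := by
      rw [hΦ_def]
      dsimp only
      rw [e0, NormedSpace.exp_add_of_commute ((hlAlB.smul_left t).smul_right (-t))]
    have e2 : NormedSpace.exp ((-t) • lB) * B = NormedSpace.exp ((1 - t) • lB) := by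
      conv_lhs => rw [← hexpB]
      rw [← NormedSpace.exp_add_of_commute ((Commute.refl lB).smul_left (-t))]
      congr 1
      module
    rw [my_rpow_eq_exp A hA hσA t, my_rpow_eq_exp B hB hσB (1 - t), e1, mul_assoc, e2,
      ← hlA_def, ← hlB_def]
  have hΦcont : Continuous Φ :=
    NormedSpace.exp_continuous.comp (continuous_id.smul continuous_const)
  have hΦint : IntervalIntegrable Φ MeasureTheory.volume 0 1 := hΦcont.intervalIntegrable _ _
  set I : H →L[ℂ] H := ∫ t in (0:ℝ)..1, Φ t with hI_def
  have hpull : (∫ t in (0:ℝ)..1, Φ t * B) = I * B := by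
    let L : (H →L[ℂ] H) →L[ℝ] (H →L[ℂ] H) := (ContinuousLinearMap.mul ℝ (H →L[ℂ] H)).flip B
    exact L.intervalIntegral_comp_comm hΦint
  have hpushL : (∫ t in (0:ℝ)..1, B * Φ t) = B * I := by
    let L : (H →L[ℂ] H) →L[ℝ] (H →L[ℂ] H) := ContinuousLinearMap.mul ℝ (H →L[ℂ] H) B
    exact L.intervalIntegral_comp_comm hΦint
  have hIB : Commute I B := by
    show I * B = B * I
    rw [← hpull, ← hpushL]
    exact intervalIntegral.integral_congr fun t _ => (hΦB t).eq
  have hint_eq : (∫ t in (0:ℝ)..1, A ^ t * B ^ (1 - t)) = I * B := by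
    rw [← hpull]
    exact intervalIntegral.integral_congr fun t _ => claim2 t
  have hΦ1B : Φ 1 * B = A := by
    have h := (claim2 1).symm
    rwa [CFC.rpow_one A hA, (by norm_num : (1:ℝ) - 1 = 0), CFC.rpow_zero B hB, mul_one] at h
  have hΦhalf : Φ 2⁻¹ * Φ 2⁻¹ = Φ 1 := by
    rw [hΦ_def]; dsimp only
    rw [← NormedSpace.exp_add_of_commute (Commute.refl ((2⁻¹:ℝ) • D))]
    congr 1
    module
  have hsqrt : CFC.sqrt (A * B) = Φ 2⁻¹ * B := by
    refine CFC.sqrt_unique ?_ (my_mul_nonneg (hΦnn _) hB (hΦB _))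
    calc (Φ 2⁻¹ * B) * (Φ 2⁻¹ * B) = Φ 2⁻¹ * (B * Φ 2⁻¹) * B := by
          simp only [mul_assoc]
      _ = Φ 2⁻¹ * (Φ 2⁻¹ * B) * B := by rw [(hΦB 2⁻¹).eq]
      _ = (Φ 2⁻¹ * Φ 2⁻¹) * B * B := by simp only [mul_assoc]
      _ = (Φ 1 * B) * B := by rw [hΦhalf]
      _ = A * B := by rw [hΦ1B]
  have key1 : Φ 2⁻¹ ≤ I := by
    have hmid : ∀ t ∈ Set.Icc (0:ℝ) 1, Φ 2⁻¹ ≤ (2⁻¹ : ℝ) • (Φ t + Φ (1 - t)) := by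
      intro t _
      have hrhs : (2⁻¹:ℝ) • (Φ t + Φ (1 - t))
          = cfc (fun x:ℝ => 2⁻¹ * (Real.exp (t*x) + Real.exp ((1-t)*x))) D := by
        rw [hΦcfc t, hΦcfc (1 - t),
          ← cfc_add D (fun x:ℝ => Real.exp (t*x)) (fun x:ℝ => Real.exp ((1-t)*x)),
          ← cfc_const_mul (2⁻¹:ℝ) (fun x:ℝ => Real.exp (t*x) + Real.exp ((1-t)*x)) D]
      rw [hΦcfc 2⁻¹, hrhs]
      refine cfc_mono (fun x _ => ?_)
      have e2 : Real.exp (t*x/2) * Real.exp (t*x/2) = Real.exp (t*x) := by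
        rw [← Real.exp_add]; congr 1; ring
      have e3 : Real.exp ((1-t)*x/2) * Real.exp ((1-t)*x/2) = Real.exp ((1-t)*x) := by
        rw [← Real.exp_add]; congr 1; ring
      have e4 : Real.exp (t*x/2) * Real.exp ((1-t)*x/2) = Real.exp (2⁻¹*x) := by
        rw [← Real.exp_add]; congr 1; ring
      nlinarith [sq_nonneg (Real.exp (t*x/2) - Real.exp ((1-t)*x/2))]
    have hΦrint : IntervalIntegrable (fun t => Φ (1 - t)) MeasureTheory.volume 0 1 :=
      (hΦcont.comp (continuous_const.sub continuous_id)).intervalIntegrable _ _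
    have hsum : IntervalIntegrable (fun t => (2⁻¹:ℝ) • (Φ t + Φ (1 - t))) MeasureTheory.volume 0 1 :=
      (((hΦcont.add (hΦcont.comp (continuous_const.sub continuous_id))).const_smul
        (2⁻¹:ℝ)).intervalIntegrable _ _)
    have hmono := my_integral_mono intervalIntegrable_const hsum hmid
    have hrefl : (∫ t in (0:ℝ)..1, Φ (1 - t)) = I := by
      rw [intervalIntegral.integral_comp_sub_left Φ 1]
      norm_num
      exact hI_def.symm
    rw [intervalIntegral.integral_const, sub_zero, one_smul, intervalIntegral.integral_smul,
      intervalIntegral.integral_add hΦint hΦrint, hrefl] at hmono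
    calc Φ 2⁻¹ ≤ (2⁻¹:ℝ) • (I + I) := hmono
      _ = I := by rw [← two_smul ℝ I, smul_smul]; norm_num
  set C := cfc Real.exp D with hC_def
  have hC_eq : Φ 1 = C := by
    rw [hΦcfc 1]; exact cfc_congr fun x _ => by rw [one_mul]
  have key2 : I ≤ (2⁻¹:ℝ) • (1 + C) := by
    have hpt : ∀ t ∈ Set.Icc (0:ℝ) 1, Φ t ≤ (1 - t) • (1 : H →L[ℂ] H) + t • C := by
      intro t ht
      have hrhs : cfc (fun x : ℝ => (1 - t) + t * Real.exp x) D
          = (1 - t) • (1 : H →L[ℂ] H) + t • C := by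
        rw [cfc_add D (fun _ : ℝ => (1 - t)) (fun x : ℝ => t * Real.exp x),
          cfc_const (1 - t) D hD, Algebra.algebraMap_eq_smul_one,
          cfc_const_mul t Real.exp D]
      rw [hΦcfc t, ← hrhs]
      refine cfc_mono (fun x _ => ?_)
      have hcvx := convexOn_exp.2 (Set.mem_univ (0:ℝ)) (Set.mem_univ x)
        (show (0:ℝ) ≤ 1 - t by linarith [ht.2]) ht.1 (by ring : (1 - t) + t = 1)
      simpa using hcvx
    have hint1 : IntervalIntegrable (fun t : ℝ => (1 - t) • (1 : H →L[ℂ] H))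
        MeasureTheory.volume 0 1 := by
      apply Continuous.intervalIntegrable; fun_prop
    have hint2 : IntervalIntegrable (fun t : ℝ => t • C) MeasureTheory.volume 0 1 := by
      apply Continuous.intervalIntegrable; fun_prop
    have hmono := my_integral_mono hΦint (hint1.add hint2) hpt
    have hKeq : (∫ t in (0:ℝ)..1, ((1 - t) • (1 : H →L[ℂ] H) + t • C)) = (2⁻¹:ℝ) • (1 + C) := by
      rw [intervalIntegral.integral_add hint1 hint2, intervalIntegral.integral_smul_const,
        intervalIntegral.integral_smul_const]
      have h1 : (∫ t in (0:ℝ)..1, (1 - t)) = 2⁻¹ := by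
        have := integral_id (a := (0:ℝ)) (b := 1)
        have h0 : (∫ t in (0:ℝ)..1, (1 - t)) = (∫ _ in (0:ℝ)..1, (1:ℝ)) - ∫ t in (0:ℝ)..1, t :=
          intervalIntegral.integral_sub intervalIntegrable_const
            (continuous_id.intervalIntegrable _ _)
        rw [h0, intervalIntegral.integral_const, integral_id]
        norm_num
      have h2 : (∫ t in (0:ℝ)..1, t) = 2⁻¹ := by
        rw [integral_id]; norm_num
      rw [h1, h2, smul_add]
    rwa [hKeq] at hmono
  constructor
  · rw [hint_eq, hsqrt]
    exact my_mul_right_mono key1 hB (hΦB 2⁻¹) hIB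
  · rw [hint_eq]
    have hCB : Commute C B := my_commute_cfc Real.exp hD hDB
    have hhalfB : Commute ((2⁻¹:ℝ) • (1 + C)) B := ((Commute.one_left B).add_left hCB).smul_left _
    have hfin := my_mul_right_mono key2 hB hIB hhalfB
    have hCBA : C * B = A := by rw [← hC_eq, hΦ1B]
    have hfin_eq : ((2⁻¹:ℝ) • (1 + C)) * B = (1/2 : ℝ) • (A + B) := by
      rw [smul_mul_assoc, add_mul, one_mul, hCBA, add_comm]
      norm_num
    rwa [hfin_eq] at hfin
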